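/- arXiv:2009.00527 — 2 statements merged into one kernel-verified Lean document; each statement's English description precedes it below -/
import Mathlib

section
/- For every a > 0, the sum over n ≥ 1 of (2n+1)/(1 + (n(n+1)/a)²)² is strictly less than a·π/4. -/
open Real

private lemma pade {x : ℝ} (hx : 0 ≤ x) : 3 * x / (3 + x ^ 2) ≤ arctan x := by
  have key : ∀ y : ℝ, HasDerivAt (fun t : ℝ => arctan t - 3 * t / (3 + t ^ 2))
      (1 / (1 + y ^ 2) - (3 * (3 + y ^ 2) - 3 * y * (2 * y ^ 1)) / (3 + y ^ 2) ^ 2) y := by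
    intro y
    have h1 : HasDerivAt (fun t : ℝ => 3 * t) 3 y := by
      simpa using (hasDerivAt_id y).const_mul 3
    have h2 : HasDerivAt (fun t : ℝ => 3 + t ^ 2) (2 * y ^ 1) y := by
      simpa using (hasDerivAt_pow 2 y).const_add 3
    have hne : (3 + y ^ 2) ≠ 0 := by positivity
    exact (Real.hasDerivAt_arctan y).sub (h1.div h2 hne)
  have hmono : Monotone (fun t : ℝ => arctan t - 3 * t / (3 + t ^ 2)) := by
    apply monotone_of_deriv_nonneg
    · exact fun y => (key y).differentiableAt
    · intro y
      rw [(key y).deriv]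
      have h2 : (0:ℝ) < (3 + y ^ 2) ^ 2 := by positivity
      have h1 : (0:ℝ) < 1 + y ^ 2 := by positivity
      rw [sub_nonneg, div_le_div_iff₀ h2 h1]
      nlinarith [sq_nonneg (y ^ 2), sq_nonneg y]
  have h0 := hmono hx
  norm_num [Real.arctan_zero] at h0
  linarith

private lemma halfpi {x : ℝ} (hx : 0 ≤ x) : arctan x + x / (1 + x ^ 2) ≤ π / 2 := by
  rcases eq_or_lt_of_le hx with h | h
  · rw [← h]
    norm_num [Real.arctan_zero]
    positivity
  · have hinv := Real.arctan_inv_of_pos h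
    have hp := pade (x := x⁻¹) (by positivity)
    have heq : 3 * x⁻¹ / (3 + x⁻¹ ^ 2) = 3 * x / (3 * x ^ 2 + 1) := by
      rw [div_eq_div_iff (by positivity) (by positivity)]
      field_simp
    rw [heq, hinv] at hp
    have hle : x / (1 + x ^ 2) ≤ 3 * x / (3 * x ^ 2 + 1) := by
      rw [div_le_div_iff₀ (by positivity) (by positivity)]
      nlinarith
    linarith

set_option maxHeartbeats 2000000 in
private lemma keylemma (a : ℝ) (ha : 0 < a) {m : ℝ} (hm : 0 ≤ m) :
    (2 * (m + 1) + 1) / (1 + ((m + 1) * (m + 2) / a) ^ 2) ^ 2 ≤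
      (a / 2 * arctan (((m + 1) ^ 2 + 2 * (m + 1)) / a)
        + a ^ 2 * ((m + 1) ^ 2 + 2 * (m + 1)) / (2 * (a ^ 2 + ((m + 1) ^ 2 + 2 * (m + 1)) ^ 2)))
      - (a / 2 * arctan ((m ^ 2 + 2 * m) / a)
        + a ^ 2 * (m ^ 2 + 2 * m) / (2 * (a ^ 2 + (m ^ 2 + 2 * m) ^ 2))) := by
  have hBB : (m + 1) ^ 2 + 2 * (m + 1) = m ^ 2 + 4 * m + 3 := by ring
  rw [hBB]
  have ha' : a ≠ 0 := ha.ne'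
  have hA : (0:ℝ) ≤ m ^ 2 + 2 * m := by nlinarith
  have hB : (0:ℝ) < m ^ 2 + 4 * m + 3 := by nlinarith
  have hQ : (0:ℝ) ≤ (m ^ 2 + 2 * m) * (m ^ 2 + 4 * m + 3) := mul_nonneg hA hB.le
  have hden : (0:ℝ) < a ^ 2 + (m ^ 2 + 2 * m) * (m ^ 2 + 4 * m + 3) := by positivity
  have hw : (0:ℝ) < 2 * m + 3 := by linarith
  have hθ : (0:ℝ) ≤ a * (2 * m + 3) / (a ^ 2 + (m ^ 2 + 2 * m) * (m ^ 2 + 4 * m + 3)) := by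
    positivity
  have hprodnn : (0:ℝ) ≤ ((m ^ 2 + 4 * m + 3) / a) * ((m ^ 2 + 2 * m) / a) :=
    mul_nonneg (div_nonneg hB.le ha.le) (div_nonneg hA ha.le)
  have hp : ((m ^ 2 + 4 * m + 3) / a) * (-((m ^ 2 + 2 * m) / a)) < 1 := by nlinarith
  have h5 : (0:ℝ) < 1 - ((m ^ 2 + 4 * m + 3) / a) * (-((m ^ 2 + 2 * m) / a)) := by nlinarith
  have h6 := Real.arctan_add hp
  rw [Real.arctan_neg, ← sub_eq_add_neg] at h6
  have harg : ((m ^ 2 + 4 * m + 3) / a + -((m ^ 2 + 2 * m) / a)) /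
      (1 - (m ^ 2 + 4 * m + 3) / a * -((m ^ 2 + 2 * m) / a)) =
      a * (2 * m + 3) / (a ^ 2 + (m ^ 2 + 2 * m) * (m ^ 2 + 4 * m + 3)) := by
    rw [div_eq_div_iff h5.ne' hden.ne']
    field_simp
    ring
  rw [harg] at h6
  have hsplit :
      (a / 2 * arctan ((m ^ 2 + 4 * m + 3) / a)
        + a ^ 2 * (m ^ 2 + 4 * m + 3) / (2 * (a ^ 2 + (m ^ 2 + 4 * m + 3) ^ 2)))
      - (a / 2 * arctan ((m ^ 2 + 2 * m) / a)
        + a ^ 2 * (m ^ 2 + 2 * m) / (2 * (a ^ 2 + (m ^ 2 + 2 * m) ^ 2)))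
      = a / 2 * (arctan ((m ^ 2 + 4 * m + 3) / a) - arctan ((m ^ 2 + 2 * m) / a))
        + (a ^ 2 * (m ^ 2 + 4 * m + 3) / (2 * (a ^ 2 + (m ^ 2 + 4 * m + 3) ^ 2))
           - a ^ 2 * (m ^ 2 + 2 * m) / (2 * (a ^ 2 + (m ^ 2 + 2 * m) ^ 2))) := by ring
  rw [hsplit, h6]
  set θ := a * (2 * m + 3) / (a ^ 2 + (m ^ 2 + 2 * m) * (m ^ 2 + 4 * m + 3)) with hθdef
  have h2' := pade hθ
  have h8 : a / 2 * (3 * θ / (3 + θ ^ 2)) ≤ a / 2 * arctan θ :=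
    mul_le_mul_of_nonneg_left h2' (by positivity)
  have hP2 : (0:ℝ) ≤ 1728 * a^2 * m + 19296 * a^2 * m^2 + 99744 * a^2 * m^3 + 308368 * a^2 * m^4 + 629244 * a^2 * m^5 + 891694 * a^2 * m^6 + 902604 * a^2 * m^7 + 661630 * a^2 * m^8 + 351876 * a^2 * m^9 + 134378 * a^2 * m^10 + 35892 * a^2 * m^11 + 6362 * a^2 * m^12 + 672 * a^2 * m^13 + 32 * a^2 * m^14 + 576 * (a^2)^2 + 6240 * (a^2)^2 * m + 27280 * (a^2)^2 * m^2 + 65832 * (a^2)^2 * m^3 + 98488 * (a^2)^2 * m^4 + 96048 * (a^2)^2 * m^5 + 62080 * (a^2)^2 * m^6 + 26352 * (a^2)^2 * m^7 + 7056 * (a^2)^2 * m^8 + 1080 * (a^2)^2 * m^9 + 72 * (a^2)^2 * m^10 + 222 * (a^2)^3 + 1212 * (a^2)^3 * m + 2582 * (a^2)^3 * m^2 + 2748 * (a^2)^3 * m^3 + 1538 * (a^2)^3 * m^4 + 432 * (a^2)^3 * m^5 + 48 * (a^2)^3 * m^6 + 12 * (a^2)^4 + 24 * (a^2)^4 * m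 + 8 * (a^2)^4 * m^2 := (add_nonneg (add_nonneg (add_nonneg (add_nonneg (add_nonneg (add_nonneg (add_nonneg (add_nonneg (add_nonneg (add_nonneg (add_nonneg (add_nonneg (add_nonneg (add_nonneg (add_nonneg (add_nonneg (add_nonneg (add_nonneg (add_nonneg (add_nonneg (add_nonneg (add_nonneg (add_nonneg (add_nonneg (add_nonneg (add_nonneg (add_nonneg (add_nonneg (add_nonneg (add_nonneg (add_nonneg (add_nonneg (add_nonneg (add_nonneg (mul_nonneg (by positivity : (0:ℝ) ≤ 1728 * a^2) hm) (mul_nonneg (by positivity : (0:ℝ) ≤ 19296 * a^2) (pow_nonneg hm 2))) (mul_nonneg (by positivity : (0:ℝ) ≤ 99744 * a^2) (pow_nonneg hm 3))) (mul_nonneg (by positivity : (0:ℝ) ≤ 308368 * a^2) (pow_nonneg hm 4))) (mul_nonneg (by positivity : (0:ℝ) ≤ 629244 * a^2) (pow_nonneg hm 5))) (mul_nonneg (by positivity : (0:ℝ) ≤ 891694 * a^2) (pow_nonneg hm 6))) (mul_nonneg (by positivity : (0:ℝ) ≤ 902604 * a^2) (pow_nonneg hm 7))) (mul_nonneg (by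 positivity : (0:ℝ) ≤ 661630 * a^2) (pow_nonneg hm 8))) (mul_nonneg (by positivity : (0:ℝ) ≤ 351876 * a^2) (pow_nonneg hm 9))) (mul_nonneg (by positivity : (0:ℝ) ≤ 134378 * a^2) (pow_nonneg hm 10))) (mul_nonneg (by positivity : (0:ℝ) ≤ 35892 * a^2) (pow_nonneg hm 11))) (mul_nonneg (by positivity : (0:ℝ) ≤ 6362 * a^2) (pow_nonneg hm 12))) (mul_nonneg (by positivity : (0:ℝ) ≤ 672 * a^2) (pow_nonneg hm 13))) (mul_nonneg (by positivity : (0:ℝ) ≤ 32 * a^2) (pow_nonneg hm 14))) (by positivity : (0:ℝ) ≤ 576 * (a^2)^2)) (mul_nonneg (by positivity : (0:ℝ) ≤ 6240 * (a^2)^2) hm)) (mul_nonneg (by positivity : (0:ℝ) ≤ 27280 * (a^2)^2) (pow_nonneg hm 2))) (mul_nonneg (by positivity : (0:ℝ) ≤ 65832 * (a^2)^2) (pow_nonneg hm 3))) (mul_nonneg (by positivity : (0:ℝ) ≤ 98488 * (a^2)^2) (pow_nonneg hm 4))) (mul_nonneg (by positivity : (0:ℝ) ≤ 96048 * (a^2)^2)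 (pow_nonneg hm 5))) (mul_nonneg (by positivity : (0:ℝ) ≤ 62080 * (a^2)^2) (pow_nonneg hm 6))) (mul_nonneg (by positivity : (0:ℝ) ≤ 26352 * (a^2)^2) (pow_nonneg hm 7))) (mul_nonneg (by positivity : (0:ℝ) ≤ 7056 * (a^2)^2) (pow_nonneg hm 8))) (mul_nonneg (by positivity : (0:ℝ) ≤ 1080 * (a^2)^2) (pow_nonneg hm 9))) (mul_nonneg (by positivity : (0:ℝ) ≤ 72 * (a^2)^2) (pow_nonneg hm 10))) (by positivity : (0:ℝ) ≤ 222 * (a^2)^3)) (mul_nonneg (by positivity : (0:ℝ) ≤ 1212 * (a^2)^3) hm)) (mul_nonneg (by positivity : (0:ℝ) ≤ 2582 * (a^2)^3) (pow_nonneg hm 2))) (mul_nonneg (by positivity : (0:ℝ) ≤ 2748 * (a^2)^3) (pow_nonneg hm 3))) (mul_nonneg (by positivity : (0:ℝ) ≤ 1538 * (a^2)^3) (pow_nonneg hm 4))) (mul_nonneg (by positivity : (0:ℝ) ≤ 432 * (a^2)^3) (pow_nonneg hm 5))) (mul_nonneg (by positivity : (0:ℝ) ≤ 48 * (a^2)^3)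 (pow_nonneg hm 6))) (by positivity : (0:ℝ) ≤ 12 * (a^2)^4)) (mul_nonneg (by positivity : (0:ℝ) ≤ 24 * (a^2)^4) hm)) (mul_nonneg (by positivity : (0:ℝ) ≤ 8 * (a^2)^4) (pow_nonneg hm 2)))
  have h3 : (2 * (m + 1) + 1) / (1 + ((m + 1) * (m + 2) / a) ^ 2) ^ 2 ≤
      a / 2 * (3 * θ / (3 + θ ^ 2))
      + (a ^ 2 * (m ^ 2 + 4 * m + 3) / (2 * (a ^ 2 + (m ^ 2 + 4 * m + 3) ^ 2))
         - a ^ 2 * (m ^ 2 + 2 * m) / (2 * (a ^ 2 + (m ^ 2 + 2 * m) ^ 2))) := by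
    rw [← sub_nonneg]
    have hden2 : (0:ℝ) < a ^ 2 + (m ^ 2 + 2 * m) ^ 2 := by positivity
    have hden3 : (0:ℝ) < a ^ 2 + (m ^ 2 + 4 * m + 3) ^ 2 := by positivity
    have hden4 : (0:ℝ) < a ^ 2 + ((m + 1) * (m + 2)) ^ 2 := by positivity
    have hden5 : (0:ℝ) < 1 + ((m + 1) * (m + 2) / a) ^ 2 := by positivity
    have hE : (0:ℝ) < 3 * (a ^ 2 + (m ^ 2 + 2 * m) * (m ^ 2 + 4 * m + 3)) ^ 2
        + a ^ 2 * (2 * m + 3) ^ 2 := by positivity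
    have hθsq : (0:ℝ) < 3 + θ ^ 2 := by positivity
    have heq : a / 2 * (3 * θ / (3 + θ ^ 2))
        + (a ^ 2 * (m ^ 2 + 4 * m + 3) / (2 * (a ^ 2 + (m ^ 2 + 4 * m + 3) ^ 2))
           - a ^ 2 * (m ^ 2 + 2 * m) / (2 * (a ^ 2 + (m ^ 2 + 2 * m) ^ 2)))
        - (2 * (m + 1) + 1) / (1 + ((m + 1) * (m + 2) / a) ^ 2) ^ 2
        = (a ^ 2 * (2 * m + 3) * (1728 * a^2 * m + 19296 * a^2 * m^2 + 99744 * a^2 * m^3 + 308368 * a^2 * m^4 + 629244 * a^2 * m^5 + 891694 * a^2 * m^6 + 902604 * a^2 * m^7 + 661630 * a^2 * m^8 + 351876 * a^2 * m^9 + 134378 * a^2 * m^10 + 35892 * a^2 * m^11 + 6362 * a^2 * m^12 + 672 * a^2 * m^13 + 32 * a^2 * m^14 + 576 * (a^2)^2 + 6240 * (a^2)^2 * m + 27280 * (a^2)^2 * m^2 + 65832 * (a^2)^2 * m^3 + 98488 * (a^2)^2 * m^4 + 96048 * (a^2)^2 * m^5 + 62080 * (a^2)^2 * m^6 + 26352 *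 (a^2)^2 * m^7 + 7056 * (a^2)^2 * m^8 + 1080 * (a^2)^2 * m^9 + 72 * (a^2)^2 * m^10 + 222 * (a^2)^3 + 1212 * (a^2)^3 * m + 2582 * (a^2)^3 * m^2 + 2748 * (a^2)^3 * m^3 + 1538 * (a^2)^3 * m^4 + 432 * (a^2)^3 * m^5 + 48 * (a^2)^3 * m^6 + 12 * (a^2)^4 + 24 * (a^2)^4 * m + 8 * (a^2)^4 * m^2)) /
          (2 * (3 * (a ^ 2 + (m ^ 2 + 2 * m) * (m ^ 2 + 4 * m + 3)) ^ 2
                  + a ^ 2 * (2 * m + 3) ^ 2)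
            * (a ^ 2 + (m ^ 2 + 2 * m) ^ 2) * (a ^ 2 + (m ^ 2 + 4 * m + 3) ^ 2)
            * (a ^ 2 + ((m + 1) * (m + 2)) ^ 2) ^ 2) := by
      rw [hθdef]
      field_simp
      ring
    rw [heq]
    apply div_nonneg
    · exact mul_nonneg (mul_nonneg (by positivity) hw.le) hP2
    · positivity
  linarith

set_option maxHeartbeats 1000000 in
theorem stmt_2 (a : ℝ) (ha : 0 < a) :
    (∑' n : ℕ, (2 * ((n : ℝ) + 1) + 1) /
      (1 + (((n : ℝ) + 1) * ((n : ℝ) + 2) / a) ^ 2) ^ 2) < a * π / 4 := by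
  have ha' : a ≠ 0 := ha.ne'
  set f : ℕ → ℝ := fun n => (2 * ((n : ℝ) + 1) + 1) /
      (1 + (((n : ℝ) + 1) * ((n : ℝ) + 2) / a) ^ 2) ^ 2 with hfdef
  set g : ℕ → ℝ := fun j => a / 2 * arctan (((j : ℝ) ^ 2 + 2 * (j : ℝ)) / a)
      + a ^ 2 * ((j : ℝ) ^ 2 + 2 * (j : ℝ))
        / (2 * (a ^ 2 + ((j : ℝ) ^ 2 + 2 * (j : ℝ)) ^ 2)) with hgdef
  have hf0 : ∀ n, 0 ≤ f n := by
    intro n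
    simp only [hfdef]
    positivity
  have hterm : ∀ j : ℕ, f j ≤ g (j + 1) - g j := by
    intro j
    have h := keylemma a ha (Nat.cast_nonneg j : (0:ℝ) ≤ (j : ℝ))
    have e1 : ((j + 1 : ℕ) : ℝ) = (j : ℝ) + 1 := by push_cast; ring
    simp only [hfdef, hgdef, e1]
    exact h
  have hg_le : ∀ j : ℕ, g j ≤ a * π / 4 := by
    intro j
    have hx : (0:ℝ) ≤ ((j : ℝ) ^ 2 + 2 * (j : ℝ)) / a := by positivity
    have hh := halfpi hx
    have heq : a ^ 2 * ((j : ℝ) ^ 2 + 2 * (j : ℝ))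
        / (2 * (a ^ 2 + ((j : ℝ) ^ 2 + 2 * (j : ℝ)) ^ 2))
        = a / 2 * ((((j : ℝ) ^ 2 + 2 * (j : ℝ)) / a)
            / (1 + (((j : ℝ) ^ 2 + 2 * (j : ℝ)) / a) ^ 2)) := by
      field_simp
    have hmul := mul_le_mul_of_nonneg_left hh (by positivity : (0:ℝ) ≤ a / 2)
    simp only [hgdef]
    rw [heq]
    calc a / 2 * arctan (((j : ℝ) ^ 2 + 2 * (j : ℝ)) / a)
        + a / 2 * ((((j : ℝ) ^ 2 + 2 * (j : ℝ)) / a)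
            / (1 + (((j : ℝ) ^ 2 + 2 * (j : ℝ)) / a) ^ 2))
        = a / 2 * (arctan (((j : ℝ) ^ 2 + 2 * (j : ℝ)) / a)
          + (((j : ℝ) ^ 2 + 2 * (j : ℝ)) / a)
            / (1 + (((j : ℝ) ^ 2 + 2 * (j : ℝ)) / a) ^ 2)) := by ring
      _ ≤ a / 2 * (π / 2) := hmul
      _ = a * π / 4 := by ring
  have hg0 : g 0 = 0 := by
    simp only [hgdef]
    norm_num [Real.arctan_zero]
  set δ : ℝ := g 1 - f 0 with hδdef
  have hps : ∀ N : ℕ, ∑ j ∈ Finset.range N, f j ≤ a * π / 4 - δ := by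
    intro N
    cases N with
    | zero =>
      simp only [Finset.range_zero, Finset.sum_empty]
      have := hg_le 1
      have := hf0 0
      rw [hδdef]
      linarith
    | succ K =>
      rw [Finset.sum_range_succ']
      have htel : ∑ i ∈ Finset.range K, (g (i + 1 + 1) - g (i + 1)) = g (K + 1) - g 1 :=
        Finset.sum_range_sub (fun i => g (i + 1)) K
      have hsum2 : ∑ k ∈ Finset.range K, f (k + 1) ≤ g (K + 1) - g 1 := by
        rw [← htel]
        exact Finset.sum_le_sum fun i _ => hterm (i + 1)
      have h9 := hg_le (K + 1)
      rw [hδdef]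
      refine le_trans (add_le_add_left hsum2 (f 0)) ?_
      linarith
  have hle : (∑' n : ℕ, f n) ≤ a * π / 4 - δ := Real.tsum_le_of_sum_range_le hf0 hps
  have hδpos : 0 < δ := by
    have e0 : f 0 = 3 * a ^ 4 / (a ^ 2 + 4) ^ 2 := by
      simp only [hfdef]
      norm_num
      rw [div_eq_div_iff (by positivity) (by positivity)]
      field_simp
      ring
    have e1 : g 1 = a / 2 * arctan (3 / a) + a ^ 2 * 3 / (2 * (a ^ 2 + 9)) := by
      simp only [hgdef]
      norm_num
    have hp := pade (show (0:ℝ) ≤ 3 / a by positivity)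
    have e2 : 3 * (3 / a) / (3 + (3 / a) ^ 2) = 3 * a / (a ^ 2 + 3) := by
      rw [div_eq_div_iff (by positivity) (by positivity)]
      field_simp
    rw [e2] at hp
    have hmul := mul_le_mul_of_nonneg_left hp (by positivity : (0:ℝ) ≤ a / 2)
    have e3 : a / 2 * (3 * a / (a ^ 2 + 3)) = 3 * a ^ 2 / (2 * (a ^ 2 + 3)) := by
      rw [div_mul_div_comm]
      ring_nf
    have hfrac : 3 * a ^ 4 / (a ^ 2 + 4) ^ 2
        < 3 * a ^ 2 / (2 * (a ^ 2 + 3)) + a ^ 2 * 3 / (2 * (a ^ 2 + 9)) := by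
      rw [div_add_div _ _ (by positivity : (2 * (a ^ 2 + 3)) ≠ 0)
        (by positivity : (2 * (a ^ 2 + 9)) ≠ 0), div_lt_div_iff₀ (by positivity) (by positivity)]
      nlinarith [pow_pos ha 2, pow_pos ha 4, pow_pos ha 6, pow_pos ha 8, pow_pos ha 10]
    rw [hδdef, e0, e1]
    rw [e3] at hmul
    linarith
  calc (∑' n : ℕ, f n) ≤ a * π / 4 - δ := hle
    _ < a * π / 4 := by linarith
end

section
/- Let G(ν) = ∑_{n=1}^∞ (2n+1) g(ν n(n+1)) with g(t) = 1/(1+t²)². Then ν·G(ν) → ∫₀^∞ g(t) dt = π/4 as ν → 0⁺. -/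
open Real MeasureTheory Filter Set Topology

noncomputable def GG : ℝ → ℝ := fun t => 1 / (1 + t ^ 2) ^ 2

lemma GG_cont : Continuous GG := by
  apply Continuous.div continuous_const (by continuity)
  intro x; positivity

lemma GG_nonneg (t : ℝ) : 0 ≤ GG t := by unfold GG; positivity

lemma GG_le_one (t : ℝ) : GG t ≤ 1 := by
  unfold GG
  rw [div_le_one (by positivity)]
  nlinarith [sq_nonneg t, sq_nonneg (t^2)]

lemma GG_anti {a b : ℝ} (ha : 0 ≤ a) (hab : a ≤ b) : GG b ≤ GG a := by
  unfold GG
  apply one_div_le_one_div_of_le (by positivity)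
  have : a^2 ≤ b^2 := by nlinarith
  nlinarith [sq_nonneg a, sq_nonneg b]

lemma GG_le_inv_sq {t : ℝ} (ht : 0 < t) : GG t ≤ 1 / t ^ 4 := by
  unfold GG
  apply one_div_le_one_div_of_le (by positivity)
  nlinarith [sq_nonneg t, sq_nonneg (t^2)]

lemma GG_int : IntegrableOn GG (Ioi 0) := by
  apply MeasureTheory.Integrable.mono (integrable_inv_one_add_sq.integrableOn)
    GG_cont.aestronglyMeasurable.restrict
  filter_upwards with x
  rw [Real.norm_of_nonneg (GG_nonneg x), Real.norm_of_nonneg (by positivity)]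
  unfold GG
  rw [one_div, inv_le_inv₀ (by positivity) (by positivity)]
  exact le_self_pow₀ (by nlinarith [sq_nonneg x]) (by norm_num)

lemma GG_integral : ∫ t in Ioi (0:ℝ), GG t = π / 4 := by
  have hderiv : ∀ x ∈ Ici (0:ℝ),
      HasDerivAt (fun t : ℝ => (t / (1 + t ^ 2) + arctan t) / 2) (GG x) x := by
    intro x _
    have h1 : HasDerivAt (fun t : ℝ => t / (1 + t ^ 2))
        ((1 * (1 + x ^ 2) - x * (2 * x)) / (1 + x ^ 2) ^ 2) x := by
      exact (hasDerivAt_id x).div (by simpa using (hasDerivAt_pow 2 x).const_add 1)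
        (by positivity)
    have h2 := (h1.add (Real.hasDerivAt_arctan x)).div_const 2
    refine h2.congr_deriv ?_
    unfold GG
    have h3 : (1:ℝ) + x ^ 2 ≠ 0 := by positivity
    field_simp
    ring
  have htop : Tendsto (fun t : ℝ => (t / (1 + t ^ 2) + arctan t) / 2) atTop (𝓝 (π / 4)) := by
    have h1 : Tendsto (fun t : ℝ => t / (1 + t ^ 2)) atTop (𝓝 0) := by
      apply tendsto_of_tendsto_of_tendsto_of_le_of_le' tendsto_const_nhds
        tendsto_inv_atTop_zero
      · filter_upwards [eventually_gt_atTop 0] with t ht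
        positivity
      · filter_upwards [eventually_gt_atTop 0] with t ht
        rw [div_le_iff₀ (by positivity), inv_mul_eq_div, le_div_iff₀ ht]
        nlinarith
    have h2 : Tendsto (fun t : ℝ => arctan t) atTop (𝓝 (π / 2)) :=
      Real.tendsto_arctan_atTop.mono_right nhdsWithin_le_nhds
    have := (h1.add h2).div_const 2
    rw [show ((0:ℝ)+π/2)/2 = π/4 by ring] at this
    exact this
  have := MeasureTheory.integral_Ioi_of_hasDerivAt_of_tendsto' hderiv GG_int htop
  simpa [Real.arctan_zero] using this

lemma tele_hasSum (k : ℕ) :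
    HasSum (fun n : ℕ => 1/((n:ℝ)+k+1) - 1/((n:ℝ)+k+2)) (1/((k:ℝ)+1)) := by
  have hnn : ∀ n : ℕ, 0 ≤ 1/((n:ℝ)+k+1) - 1/((n:ℝ)+k+2) := by
    intro n
    rw [sub_nonneg]
    apply one_div_le_one_div_of_le (by positivity)
    linarith
  rw [hasSum_iff_tendsto_nat_of_nonneg hnn]
  have hps : ∀ N : ℕ, ∑ n ∈ Finset.range N, (1/((n:ℝ)+k+1) - 1/((n:ℝ)+k+2))
      = 1/((k:ℝ)+1) - 1/((N:ℝ)+k+1) := by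
    intro N
    have h := Finset.sum_range_sub' (fun n : ℕ => 1/((n:ℝ)+k+1)) N
    have h2 : ∑ n ∈ Finset.range N, (1/((n:ℝ)+k+1) - 1/((n:ℝ)+k+2))
        = ∑ n ∈ Finset.range N, ((fun n : ℕ => 1/((n:ℝ)+k+1)) n - (fun n : ℕ => 1/((n:ℝ)+k+1)) (n+1)) := by
      apply Finset.sum_congr rfl
      intro i _
      push_cast
      ring_nf
    rw [h2, h]
    norm_num
  simp only [hps]
  have h1 : Tendsto (fun N : ℕ => 1/((N:ℝ)+k+1)) atTop (𝓝 0) := by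
    simp only [one_div]
    have h0 : Tendsto (fun N : ℕ => ((N:ℝ)+k+1)) atTop atTop :=
      tendsto_atTop_add_const_right atTop _
        (tendsto_atTop_add_const_right atTop _ tendsto_natCast_atTop_atTop)
    exact h0.inv_tendsto_atTop
  simpa using (tendsto_const_nhds (x := 1/((k:ℝ)+1))).sub h1

lemma tele_summable (k : ℕ) : Summable (fun n : ℕ => 1/((n:ℝ)+k+1) - 1/((n:ℝ)+k+2)) :=
  (tele_hasSum k).summable

lemma tele_tsum (k : ℕ) :
    ∑' n : ℕ, (1/((n:ℝ)+k+1) - 1/((n:ℝ)+k+2)) = 1/((k:ℝ)+1) :=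
  (tele_hasSum k).tsum_eq

lemma GG_le_inv_sq' {t : ℝ} (ht : 0 < t) : GG t ≤ 1 / t ^ 2 := by
  unfold GG
  apply one_div_le_one_div_of_le (by positivity)
  nlinarith [sq_nonneg t, sq_nonneg (t^2)]

lemma inv_succ_sub (x : ℝ) (hx : 0 ≤ x) :
    1/(x+1) - 1/(x+2) = 1/((x+1)*(x+2)) := by
  field_simp
  ring

lemma summable_h {ν : ℝ} (hν : 0 < ν) :
    Summable (fun n : ℕ => GG (ν*(((n:ℝ)+1)*((n:ℝ)+2)))) := by
  apply Summable.of_nonneg_of_le (fun n => GG_nonneg _)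
    (f := fun n : ℕ => (1/ν^2) * (1/((n:ℝ)+(0:ℕ)+1) - 1/((n:ℝ)+(0:ℕ)+2)))
  · intro n
    set x : ℝ := ((n:ℝ)+1)*((n:ℝ)+2) with hxdef
    have hx1 : (1:ℝ) ≤ x := by rw [hxdef]; nlinarith [(n.cast_nonneg : (0:ℝ) ≤ n)]
    have hxpos : (0:ℝ) < x := by linarith
    have h1 : GG (ν*x) ≤ 1 / (ν*x)^2 := GG_le_inv_sq' (by positivity)
    refine h1.trans ?_
    rw [show ((n:ℝ)+(0:ℕ)+1) = (n:ℝ)+1 by norm_num, show ((n:ℝ)+(0:ℕ)+2) = (n:ℝ)+2 by norm_num,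
      inv_succ_sub _ (by positivity), ← hxdef]
    rw [div_mul_div_comm, one_mul]
    apply one_div_le_one_div_of_le (by positivity)
    rw [mul_pow]
    nlinarith [sq_nonneg ν, mul_pos hν hν]
  · exact (tele_summable 0).mul_left _

lemma summable_a {ν : ℝ} (hν : 0 < ν) :
    Summable (fun n : ℕ => (2*((n:ℝ)+1)+1) * GG (ν*(((n:ℝ)+1)*((n:ℝ)+2)))) := by
  apply Summable.of_nonneg_of_le
    (fun n => mul_nonneg (by positivity) (GG_nonneg _))
    (f := fun n : ℕ => (3/ν^2) * (1/((n:ℝ)+(0:ℕ)+1) - 1/((n:ℝ)+(0:ℕ)+2)))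
  · intro n
    set x : ℝ := ((n:ℝ)+1)*((n:ℝ)+2) with hxdef
    have hx1 : (1:ℝ) ≤ x := by rw [hxdef]; nlinarith [(n.cast_nonneg : (0:ℝ) ≤ n)]
    have hxpos : (0:ℝ) < x := by linarith
    have hc : 2*((n:ℝ)+1)+1 ≤ 3*x := by rw [hxdef]; nlinarith [(n.cast_nonneg : (0:ℝ) ≤ n)]
    have h1 : GG (ν*x) ≤ 1 / (ν*x)^2 := GG_le_inv_sq' (by positivity)
    have h3 : (2*((n:ℝ)+1)+1) * GG (ν*x) ≤ (2*((n:ℝ)+1)+1) * (1 / (ν*x)^2) :=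
      mul_le_mul_of_nonneg_left h1 (by positivity)
    refine h3.trans ?_
    rw [show ((n:ℝ)+(0:ℕ)+1) = (n:ℝ)+1 by norm_num, show ((n:ℝ)+(0:ℕ)+2) = (n:ℝ)+2 by norm_num,
      inv_succ_sub _ (by positivity), ← hxdef]
    rw [div_mul_div_comm, mul_one, mul_pow, mul_one_div,
      div_le_div_iff₀ (by positivity) (by positivity)]
    nlinarith [mul_le_mul_of_nonneg_right hc (le_of_lt (show (0:ℝ) < ν^2*x by positivity)), mul_pos hxpos hxpos, sq_nonneg ν]
  · exact (tele_summable 0).mul_left _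

lemma Etail {ν : ℝ} (hν0 : 0 < ν) (M : ℕ) :
    ∑' n : ℕ, GG (ν*((((n+M:ℕ):ℝ)+1)*(((n+M:ℕ):ℝ)+2)))
      ≤ (1/(ν^2*((M:ℝ)+1)^2)) * (1/((M:ℝ)+1)) := by
  have hsum := summable_h hν0
  have hle : ∀ n : ℕ, GG (ν*((((n+M:ℕ):ℝ)+1)*(((n+M:ℕ):ℝ)+2)))
      ≤ (1/(ν^2*((M:ℝ)+1)^2)) * (1/((n:ℝ)+(M:ℝ)+1) - 1/((n:ℝ)+(M:ℝ)+2)) := by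
    intro n
    have hcast : ((n+M:ℕ):ℝ) = (n:ℝ)+(M:ℝ) := by push_cast; ring
    rw [hcast]
    set y : ℝ := ((n:ℝ)+(M:ℝ)+1)*((n:ℝ)+(M:ℝ)+2) with hydef
    have hMnn : (0:ℝ) ≤ (M:ℝ) := Nat.cast_nonneg M
    have hnnn : (0:ℝ) ≤ (n:ℝ) := Nat.cast_nonneg n
    have hy1 : (1:ℝ) ≤ y := by rw [hydef]; nlinarith
    have hypos : (0:ℝ) < y := by linarith
    have h1 : GG (ν*y) ≤ 1/(ν*y)^2 := GG_le_inv_sq' (by positivity)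
    refine h1.trans ?_
    rw [show (1:ℝ)/((n:ℝ)+(M:ℝ)+1) - 1/((n:ℝ)+(M:ℝ)+2) = 1/y by
      rw [hydef, ← inv_succ_sub ((n:ℝ)+(M:ℝ)) (by positivity)]]
    rw [div_mul_div_comm, one_mul]
    apply one_div_le_one_div_of_le (by positivity)
    rw [mul_pow]
    have hMy : ((M:ℝ)+1)^2 ≤ y := by rw [hydef]; nlinarith
    nlinarith [sq_nonneg ν, mul_pos hν0 hν0]
  have hsum1 : Summable (fun n : ℕ => GG (ν*((((n+M:ℕ):ℝ)+1)*(((n+M:ℕ):ℝ)+2)))) := by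
    have := (summable_nat_add_iff M).mpr hsum
    exact this
  have hsum2 : Summable (fun n : ℕ =>
      (1/(ν^2*((M:ℝ)+1)^2)) * (1/((n:ℝ)+(M:ℝ)+1) - 1/((n:ℝ)+(M:ℝ)+2))) :=
    (tele_summable M).mul_left _
  calc ∑' n : ℕ, GG (ν*((((n+M:ℕ):ℝ)+1)*(((n+M:ℕ):ℝ)+2)))
      ≤ ∑' n : ℕ, (1/(ν^2*((M:ℝ)+1)^2)) * (1/((n:ℝ)+(M:ℝ)+1) - 1/((n:ℝ)+(M:ℝ)+2)) :=
        Summable.tsum_le_tsum hle hsum1 hsum2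
    _ = (1/(ν^2*((M:ℝ)+1)^2)) * (1/((M:ℝ)+1)) := by rw [tsum_mul_left, tele_tsum M]

lemma Ebound {ν : ℝ} (hν0 : 0 < ν) (hν1 : ν ≤ 1) :
    ν * ∑' n : ℕ, GG (ν*(((n:ℝ)+1)*((n:ℝ)+2))) ≤ 3 * Real.sqrt ν := by
  have hspos : 0 < Real.sqrt ν := Real.sqrt_pos.mpr hν0
  have hs2 : Real.sqrt ν ^ 2 = ν := Real.sq_sqrt hν0.le
  have hs1 : Real.sqrt ν ≤ 1 := by
    rw [show (1:ℝ) = Real.sqrt 1 by simp]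
    exact Real.sqrt_le_sqrt hν1
  obtain ⟨M, hMge, hMle⟩ : ∃ M : ℕ, 1/Real.sqrt ν ≤ (M:ℝ) ∧ (M:ℝ) ≤ 1/Real.sqrt ν + 1 :=
    ⟨⌈1/Real.sqrt ν⌉₊, Nat.le_ceil _, (Nat.ceil_lt_add_one (by positivity)).le⟩
  have hsum := summable_h hν0
  have hsplit := Summable.sum_add_tsum_nat_add M hsum
  have hhead : ∑ i ∈ Finset.range M, GG (ν*(((i:ℝ)+1)*((i:ℝ)+2))) ≤ (M:ℝ) := by
    calc ∑ i ∈ Finset.range M, GG (ν*(((i:ℝ)+1)*((i:ℝ)+2)))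
        ≤ ∑ _i ∈ Finset.range M, (1:ℝ) := Finset.sum_le_sum (fun i _ => GG_le_one _)
      _ = (M:ℝ) := by simp
  have htail := Etail hν0 M
  have hts : ∑' n : ℕ, GG (ν*(((n:ℝ)+1)*((n:ℝ)+2)))
      ≤ (M:ℝ) + (1/(ν^2*((M:ℝ)+1)^2)) * (1/((M:ℝ)+1)) := by
    rw [← hsplit]
    exact add_le_add hhead htail
  have hfinal : ν * ((M:ℝ) + (1/(ν^2*((M:ℝ)+1)^2)) * (1/((M:ℝ)+1))) ≤ 3 * Real.sqrt ν := by
    have hM1 : 1/Real.sqrt ν ≤ (M:ℝ)+1 := by linarith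
    have hνM : ν * (M:ℝ) ≤ 2 * Real.sqrt ν := by
      have : ν * (M:ℝ) ≤ ν * (1/Real.sqrt ν + 1) := by
        apply mul_le_mul_of_nonneg_left hMle hν0.le
      have hν_le_s : ν ≤ Real.sqrt ν := by nlinarith
      have : ν * (1/Real.sqrt ν) = Real.sqrt ν := by
        field_simp
        exact hs2.symm
      nlinarith [mul_le_mul_of_nonneg_left hMle hν0.le]
    have hsecond : ν * ((1/(ν^2*((M:ℝ)+1)^2)) * (1/((M:ℝ)+1))) ≤ Real.sqrt ν := by
      have hM1pos : (0:ℝ) < (M:ℝ)+1 := by positivity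
      have heq : ν * ((1/(ν^2*((M:ℝ)+1)^2)) * (1/((M:ℝ)+1))) = 1/(ν*((M:ℝ)+1)^3) := by
        field_simp
      rw [heq]
      rw [div_le_iff₀ (by positivity)]
      -- 1 ≤ √ν * (ν * (M+1)^3) : since (M+1) ≥ 1/√ν, (M+1)^3 ≥ 1/√ν^3 = 1/(ν√ν)
      have h3 : (1/Real.sqrt ν)^3 ≤ ((M:ℝ)+1)^3 := by
        apply pow_le_pow_left₀ (by positivity) hM1 3
      have hcube : (1/Real.sqrt ν)^3 = 1/(ν * Real.sqrt ν) := by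
        rw [one_div_pow]
        congr 1
        rw [pow_succ, hs2]
      rw [hcube] at h3
      have key := mul_le_mul_of_nonneg_left h3 (show (0:ℝ) ≤ ν*Real.sqrt ν by positivity)
      rw [mul_one_div, div_self (by positivity : (ν*Real.sqrt ν) ≠ 0)] at key
      nlinarith [key]
    calc ν * ((M:ℝ) + (1/(ν^2*((M:ℝ)+1)^2)) * (1/((M:ℝ)+1)))
        = ν * (M:ℝ) + ν * ((1/(ν^2*((M:ℝ)+1)^2)) * (1/((M:ℝ)+1))) := by ring
      _ ≤ 2 * Real.sqrt ν + Real.sqrt ν := add_le_add hνM hsecond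
      _ = 3 * Real.sqrt ν := by ring
  have hnn : (0:ℝ) ≤ (M:ℝ) + (1/(ν^2*((M:ℝ)+1)^2)) * (1/((M:ℝ)+1)) := by positivity
  calc ν * ∑' n : ℕ, GG (ν*(((n:ℝ)+1)*((n:ℝ)+2)))
      ≤ ν * ((M:ℝ) + (1/(ν^2*((M:ℝ)+1)^2)) * (1/((M:ℝ)+1))) :=
        mul_le_mul_of_nonneg_left hts hν0.le
    _ ≤ 3 * Real.sqrt ν := hfinal

lemma integral_GG_ge {a b : ℝ} (ha : 0 ≤ a) (hab : a ≤ b) :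
    (b-a) * GG b ≤ ∫ t in a..b, GG t := by
  have h := intervalIntegral.integral_mono_on (f := fun _ => GG b) (g := GG)
    (μ := volume) hab intervalIntegrable_const (GG_cont.intervalIntegrable a b)
    (fun t ht => GG_anti (ha.trans ht.1) ht.2)
  simpa [smul_eq_mul, mul_comm] using h

lemma integral_GG_le {a b : ℝ} (ha : 0 ≤ a) (hab : a ≤ b) :
    ∫ t in a..b, GG t ≤ (b-a) * GG a := by
  have h := intervalIntegral.integral_mono_on (f := GG) (g := fun _ => GG a)
    (μ := volume) hab (GG_cont.intervalIntegrable a b) intervalIntegrable_const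
    (fun t ht => GG_anti ha ht.1)
  simpa [smul_eq_mul, mul_comm] using h

lemma integral_GG_le_pi4 {a b : ℝ} (ha : 0 ≤ a) (hab : a ≤ b) :
    ∫ t in a..b, GG t ≤ π/4 := by
  rw [intervalIntegral.integral_of_le hab, ← GG_integral]
  apply setIntegral_mono_set GG_int
  · filter_upwards with x using GG_nonneg x
  · apply HasSubset.Subset.eventuallyLE
    intro x hx
    exact lt_of_le_of_lt ha hx.1

lemma integral_GG_Ioi_ge {c : ℝ} (hc : 0 ≤ c) :
    π/4 - c ≤ ∫ t in Ioi c, GG t := by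
  have hsplit : ∫ t in Ioi (0:ℝ), GG t
      = (∫ t in Ioc 0 c, GG t) + ∫ t in Ioi c, GG t := by
    rw [← MeasureTheory.setIntegral_union]
    · rw [Ioc_union_Ioi_eq_Ioi hc]
    · rw [Set.disjoint_left]; intro x hx1 hx2; exact absurd hx2 (not_lt.mpr hx1.2)
    · exact measurableSet_Ioi
    · exact GG_int.mono_set (fun x hx => hx.1)
    · exact GG_int.mono_set (fun x hx => lt_of_le_of_lt hc hx)
  have h1 : ∫ t in Ioc 0 c, GG t ≤ c := by
    rw [← intervalIntegral.integral_of_le hc]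
    have := integral_GG_le (le_refl 0) hc
    simpa [GG, sub_zero] using this.trans (by rw [sub_zero]; nlinarith [GG_le_one (0:ℝ), GG_nonneg (0:ℝ)])
  rw [GG_integral] at hsplit
  linarith

lemma xi_cast {ν : ℝ} (n : ℕ) :
    ν*(((n:ℝ)+1)*((n:ℝ)+2)) = ν*((((n+1:ℕ)):ℝ)*(((n+1:ℕ):ℝ)+1)) := by
  push_cast; ring

lemma partial_upper {ν : ℝ} (hν0 : 0 < ν) (N : ℕ) :
    ∑ n ∈ Finset.range N, ν*((2*((n:ℝ)+1)+1) * GG (ν*(((n:ℝ)+1)*((n:ℝ)+2))))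
      ≤ π/4 + ∑ n ∈ Finset.range N, ν * GG (ν*(((n:ℝ)+1)*((n:ℝ)+2))) := by
  set ξ : ℕ → ℝ := fun m => ν*((m:ℝ)*((m:ℝ)+1)) with hxi
  have hxi0 : ξ 0 = 0 := by simp [hxi]
  have hxinn : ∀ m : ℕ, 0 ≤ ξ m := fun m => by
    have : (0:ℝ) ≤ (m:ℝ) := m.cast_nonneg
    rw [hxi]; positivity
  have hximono : ∀ m : ℕ, ξ m ≤ ξ (m+1) := fun m => by
    have : (0:ℝ) ≤ (m:ℝ) := m.cast_nonneg
    rw [hxi]; push_cast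
    nlinarith
  have hadj := intervalIntegral.sum_integral_adjacent_intervals
    (a := ξ) (n := N) (μ := volume) (f := GG)
    (fun k _ => GG_cont.intervalIntegrable _ _)
  have hterm : ∀ n ∈ Finset.range N,
      ν*((2*((n:ℝ)+1)+1) * GG (ν*(((n:ℝ)+1)*((n:ℝ)+2))))
        ≤ (∫ t in ξ n..ξ (n+1), GG t) + ν * GG (ν*(((n:ℝ)+1)*((n:ℝ)+2))) := by
    intro n _
    have harg : ν*(((n:ℝ)+1)*((n:ℝ)+2)) = ξ (n+1) := by rw [hxi]; push_cast; ring
    have hdiff : ξ (n+1) - ξ n = 2*ν*((n:ℝ)+1) := by rw [hxi]; push_cast; ring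
    have h1 : (ξ (n+1) - ξ n) * GG (ξ (n+1)) ≤ ∫ t in ξ n..ξ (n+1), GG t :=
      integral_GG_ge (hxinn n) (hximono n)
    have heq : ν*((2*((n:ℝ)+1)+1) * GG (ν*(((n:ℝ)+1)*((n:ℝ)+2))))
        = (ξ (n+1) - ξ n) * GG (ξ (n+1)) + ν * GG (ν*(((n:ℝ)+1)*((n:ℝ)+2))) := by
      rw [harg, hdiff]; ring
    rw [heq]
    exact add_le_add_left h1 _
  calc ∑ n ∈ Finset.range N, ν*((2*((n:ℝ)+1)+1) * GG (ν*(((n:ℝ)+1)*((n:ℝ)+2))))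
      ≤ ∑ n ∈ Finset.range N, ((∫ t in ξ n..ξ (n+1), GG t)
          + ν * GG (ν*(((n:ℝ)+1)*((n:ℝ)+2)))) := Finset.sum_le_sum hterm
    _ = (∑ n ∈ Finset.range N, ∫ t in ξ n..ξ (n+1), GG t)
          + ∑ n ∈ Finset.range N, ν * GG (ν*(((n:ℝ)+1)*((n:ℝ)+2))) := by
        rw [Finset.sum_add_distrib]
    _ ≤ π/4 + ∑ n ∈ Finset.range N, ν * GG (ν*(((n:ℝ)+1)*((n:ℝ)+2))) := by
        apply add_le_add_left
        rw [hadj]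
        have hmono : ξ 0 ≤ ξ N := by
          rw [hxi0]; exact hxinn N
        have := integral_GG_le_pi4 (le_of_eq hxi0.symm) hmono
        exact this

lemma partial_lower {ν : ℝ} (hν0 : 0 < ν) (N : ℕ) :
    (∫ t in (ν*2)..(ν*((((N+1:ℕ)):ℝ)*(((N+1:ℕ):ℝ)+1))), GG t)
        - ∑ n ∈ Finset.range N, ν * GG (ν*(((n:ℝ)+1)*((n:ℝ)+2)))
      ≤ ∑ n ∈ Finset.range N, ν*((2*((n:ℝ)+1)+1) * GG (ν*(((n:ℝ)+1)*((n:ℝ)+2)))) := by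
  set η : ℕ → ℝ := fun m => ν*(((m:ℝ)+1)*((m:ℝ)+2)) with heta
  have hetann : ∀ m : ℕ, 0 ≤ η m := fun m => by
    have : (0:ℝ) ≤ (m:ℝ) := m.cast_nonneg
    rw [heta]; positivity
  have hetamono : ∀ m : ℕ, η m ≤ η (m+1) := fun m => by
    have : (0:ℝ) ≤ (m:ℝ) := m.cast_nonneg
    rw [heta]; push_cast
    nlinarith
  have hadj := intervalIntegral.sum_integral_adjacent_intervals
    (a := η) (n := N) (μ := volume) (f := GG)
    (fun k _ => GG_cont.intervalIntegrable _ _)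
  have hterm : ∀ n ∈ Finset.range N,
      (∫ t in η n..η (n+1), GG t) - ν * GG (ν*(((n:ℝ)+1)*((n:ℝ)+2)))
        ≤ ν*((2*((n:ℝ)+1)+1) * GG (ν*(((n:ℝ)+1)*((n:ℝ)+2)))) := by
    intro n _
    have harg : ν*(((n:ℝ)+1)*((n:ℝ)+2)) = η n := by rw [heta]
    have hdiff : η (n+1) - η n = 2*ν*((n:ℝ)+2) := by rw [heta]; push_cast; ring
    have h1 : ∫ t in η n..η (n+1), GG t ≤ (η (n+1) - η n) * GG (η n) :=
      integral_GG_le (hetann n) (hetamono n)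
    have heq : ν*((2*((n:ℝ)+1)+1) * GG (ν*(((n:ℝ)+1)*((n:ℝ)+2))))
        = (η (n+1) - η n) * GG (η n) - ν * GG (ν*(((n:ℝ)+1)*((n:ℝ)+2))) := by
      rw [harg, hdiff]; ring
    rw [heq]
    exact sub_le_sub_right h1 _
  have h0 : η 0 = ν*2 := by rw [heta]; norm_num
  have hN : η N = ν*((((N+1:ℕ)):ℝ)*(((N+1:ℕ):ℝ)+1)) := by rw [heta]; push_cast; ring
  calc (∫ t in (ν*2)..(ν*((((N+1:ℕ)):ℝ)*(((N+1:ℕ):ℝ)+1))), GG t)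
        - ∑ n ∈ Finset.range N, ν * GG (ν*(((n:ℝ)+1)*((n:ℝ)+2)))
      = ∑ n ∈ Finset.range N, ((∫ t in η n..η (n+1), GG t)
          - ν * GG (ν*(((n:ℝ)+1)*((n:ℝ)+2)))) := by
        rw [Finset.sum_sub_distrib, hadj, h0, hN]
    _ ≤ ∑ n ∈ Finset.range N, ν*((2*((n:ℝ)+1)+1) * GG (ν*(((n:ℝ)+1)*((n:ℝ)+2)))) :=
        Finset.sum_le_sum hterm

lemma Ebound' {ν : ℝ} (hν0 : 0 < ν) (hν1 : ν ≤ 1) (N : ℕ) :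
    ∑ n ∈ Finset.range N, ν * GG (ν*(((n:ℝ)+1)*((n:ℝ)+2))) ≤ 3*Real.sqrt ν := by
  have h4 : ∑ n ∈ Finset.range N, ν * GG (ν*(((n:ℝ)+1)*((n:ℝ)+2)))
      ≤ ∑' n : ℕ, ν * GG (ν*(((n:ℝ)+1)*((n:ℝ)+2))) :=
    Summable.sum_le_tsum _ (fun i _ => mul_nonneg hν0.le (GG_nonneg _))
      ((summable_h hν0).mul_left ν)
  rw [tsum_mul_left] at h4
  exact h4.trans (Ebound hν0 hν1)

lemma tsum_upper {ν : ℝ} (hν0 : 0 < ν) (hν1 : ν ≤ 1) :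
    ν * ∑' n : ℕ, (2*((n:ℝ)+1)+1) * GG (ν*(((n:ℝ)+1)*((n:ℝ)+2)))
      ≤ π/4 + 3*Real.sqrt ν := by
  rw [← tsum_mul_left]
  apply Summable.tsum_le_of_sum_le ((summable_a hν0).mul_left ν)
  intro u
  obtain ⟨N, huN⟩ := Finset.exists_nat_subset_range u
  have h1 : ∑ n ∈ u, ν*((2*((n:ℝ)+1)+1) * GG (ν*(((n:ℝ)+1)*((n:ℝ)+2))))
      ≤ ∑ n ∈ Finset.range N, ν*((2*((n:ℝ)+1)+1) * GG (ν*(((n:ℝ)+1)*((n:ℝ)+2)))) :=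
    Finset.sum_le_sum_of_subset_of_nonneg huN
      (fun i _ _ => mul_nonneg hν0.le (mul_nonneg (by positivity) (GG_nonneg _)))
  refine h1.trans ?_
  have h2 := partial_upper hν0 N
  have h3 := Ebound' hν0 hν1 N
  linarith

lemma tsum_lower {ν : ℝ} (hν0 : 0 < ν) (hν1 : ν ≤ 1) :
    π/4 - (ν*2 + 3*Real.sqrt ν)
      ≤ ν * ∑' n : ℕ, (2*((n:ℝ)+1)+1) * GG (ν*(((n:ℝ)+1)*((n:ℝ)+2))) := by
  rw [← tsum_mul_left]
  have hkey : ∀ N : ℕ,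
      (∫ t in (ν*2)..(ν*((((N+1:ℕ)):ℝ)*(((N+1:ℕ):ℝ)+1))), GG t) - 3*Real.sqrt ν
        ≤ ∑' n : ℕ, ν*((2*((n:ℝ)+1)+1) * GG (ν*(((n:ℝ)+1)*((n:ℝ)+2)))) := by
    intro N
    have hp := partial_lower hν0 N
    have hle : ∑ n ∈ Finset.range N, ν*((2*((n:ℝ)+1)+1) * GG (ν*(((n:ℝ)+1)*((n:ℝ)+2))))
        ≤ ∑' n : ℕ, ν*((2*((n:ℝ)+1)+1) * GG (ν*(((n:ℝ)+1)*((n:ℝ)+2)))) :=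
      Summable.sum_le_tsum _ (fun i _ => mul_nonneg hν0.le
        (mul_nonneg (by positivity) (GG_nonneg _))) ((summable_a hν0).mul_left ν)
    linarith [Ebound' hν0 hν1 N]
  have htendarg : Tendsto (fun N : ℕ => ν*((((N+1:ℕ)):ℝ)*(((N+1:ℕ):ℝ)+1))) atTop atTop := by
    apply tendsto_atTop_mono (f := fun N : ℕ => ν * (N:ℝ))
    · intro N
      have : (0:ℝ) ≤ (N:ℝ) := N.cast_nonneg
      push_cast
      nlinarith [mul_le_mul_of_nonneg_left
        (show (N:ℝ) ≤ ((N:ℝ)+1)*((N:ℝ)+1+1) by nlinarith) hν0.le]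
    · exact Tendsto.const_mul_atTop hν0 tendsto_natCast_atTop_atTop
  have htend : Tendsto
      (fun N : ℕ => (∫ t in (ν*2)..(ν*((((N+1:ℕ)):ℝ)*(((N+1:ℕ):ℝ)+1))), GG t) - 3*Real.sqrt ν)
      atTop (𝓝 ((∫ t in Ioi (ν*2), GG t) - 3*Real.sqrt ν)) := by
    apply Tendsto.sub_const
    exact MeasureTheory.intervalIntegral_tendsto_integral_Ioi (ν*2)
      (GG_int.mono_set (fun x hx => lt_trans (show (0:ℝ) < ν*2 by positivity) hx)) htendarg
  have hlim := le_of_tendsto htend (Filter.Eventually.of_forall hkey)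
  have hIoi := integral_GG_Ioi_ge (c := ν*2) (by positivity)
  linarith

theorem stmt_12 (g : ℝ → ℝ) (hg : ∀ t, g t = 1 / (1 + t ^ 2) ^ 2) :
    (∫ t in Set.Ioi (0:ℝ), g t = π / 4) ∧
    Filter.Tendsto
      (fun ν : ℝ => ν * ∑' n : ℕ, (2 * ((n : ℝ) + 1) + 1) *
        g (ν * (((n : ℝ) + 1) * ((n : ℝ) + 2))))
      (nhdsWithin 0 (Set.Ioi 0)) (nhds (π / 4)) := by
  have hgG : g = GG := funext fun t => by rw [hg t]; rfl
  subst hgG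
  refine ⟨GG_integral, ?_⟩
  have hsq : Tendsto (fun ν : ℝ => Real.sqrt ν) (nhdsWithin 0 (Set.Ioi 0)) (𝓝 0) :=
    (Real.continuous_sqrt.tendsto' 0 0 (by simp)).mono_left nhdsWithin_le_nhds
  have hid : Tendsto (fun ν : ℝ => ν) (nhdsWithin 0 (Set.Ioi 0)) (𝓝 0) :=
    (continuous_id.tendsto' 0 0 rfl).mono_left nhdsWithin_le_nhds
  have hlow : Tendsto (fun ν : ℝ => π/4 - (ν*2 + 3*Real.sqrt ν))
      (nhdsWithin 0 (Set.Ioi 0)) (𝓝 (π/4)) := by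
    have := (tendsto_const_nhds (x := π/4) (f := nhdsWithin (0:ℝ) (Set.Ioi 0))).sub
      ((hid.mul_const 2).add (hsq.const_mul 3))
    simpa using this
  have hup : Tendsto (fun ν : ℝ => π/4 + 3*Real.sqrt ν)
      (nhdsWithin 0 (Set.Ioi 0)) (𝓝 (π/4)) := by
    have := (tendsto_const_nhds (x := π/4) (f := nhdsWithin (0:ℝ) (Set.Ioi 0))).add
      (hsq.const_mul 3)
    simpa using this
  apply tendsto_of_tendsto_of_tendsto_of_le_of_le' hlow hup
  · have hmem : Set.Ioo (0:ℝ) 1 ∈ nhdsWithin (0:ℝ) (Set.Ioi 0) := by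
      apply mem_nhdsWithin.mpr
      exact ⟨Set.Iio 1, isOpen_Iio, by norm_num, fun x hx => ⟨hx.2, hx.1⟩⟩
    filter_upwards [hmem] with ν hν
    exact tsum_lower hν.1 hν.2.le
  · have hmem : Set.Ioo (0:ℝ) 1 ∈ nhdsWithin (0:ℝ) (Set.Ioi 0) := by
      apply mem_nhdsWithin.mpr
      exact ⟨Set.Iio 1, isOpen_Iio, by norm_num, fun x hx => ⟨hx.2, hx.1⟩⟩
    filter_upwards [hmem] with ν hν
    exact tsum_upper hν.1 hν.2.le
end
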